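/- Suppose the lower-tail GPD piece and the spline piece Σₘ θₘ Iₘ(τ) have matching derivatives up to order q at τ_L, and among I-spline basis functions, I_{q+1} is the lowest-index basis whose (q+1)-th derivative at τ_L can be nonzero beyond I₁,...,I_q. Then the (q+1)-th derivatives match at τ_L (equivalently, the density of Y is q-th order differentiable at Q(τ_L)) if and only if θ_{q+1} = (1/I_{q+1}^{(q+1)}(τ_L)) · [ -(σ_L/(α_L τ_L^{q+1})) ∏_{j=0}^{q}(-α_L - j) - Σ_{m=1}^{q} θₘ Iₘ^{(q+1)}(τ_L) ]. -/

import Mathlib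

open Set

lemma rpow_iterated_aux (C k a : ℝ) : ∀ n : ℕ, 1 ≤ n → ∀ x : ℝ, 0 < x →
    iteratedDeriv n (fun τ : ℝ => C - k * τ ^ a) x
      = -k * (∏ j ∈ Finset.range n, (a - (j : ℝ))) * x ^ (a - (n:ℝ)) := by
  intro n hn
  induction n, hn using Nat.le_induction with
  | base =>
    intro x hx
    rw [iteratedDeriv_one]
    have h := ((Real.hasDerivAt_rpow_const (p := a) (Or.inl hx.ne')).const_mul k).const_sub C
    rw [h.deriv]
    simp [Finset.prod_range_one]
    ring
  | succ n hn ih =>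
    intro x hx
    rw [iteratedDeriv_succ]
    have hE : iteratedDeriv n (fun τ : ℝ => C - k * τ ^ a)
        =ᶠ[nhds x] fun y => -k * (∏ j ∈ Finset.range n, (a - (j : ℝ))) * y ^ (a - (n:ℝ)) := by
      filter_upwards [Ioi_mem_nhds hx] with y hy using ih y hy
    rw [hE.deriv_eq]
    have h := (Real.hasDerivAt_rpow_const (p := a - n) (Or.inl hx.ne')).const_mul
      (-k * (∏ j ∈ Finset.range n, (a - (j : ℝ))))
    rw [h.deriv, Finset.prod_range_succ]
    have : a - ((n + 1 : ℕ) : ℝ) = a - (n : ℝ) - 1 := by push_cast; ring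
    rw [this]
    ring

theorem stmt10 (M q : ℕ) (hq : q + 1 ≤ M) (σL αL τL θ0 : ℝ)
    (hσ : 0 < σL) (hα : αL ≠ 0) (hτ : τL ∈ Ioo (0:ℝ) 1)
    (I : ℕ → ℝ → ℝ) (d : ℕ → ℝ)
    (hd : ∀ m, iteratedDeriv (q + 1) (I m) τL = d m)
    (hd0 : d 0 = 0) (hvan : ∀ m, q + 1 < m → d m = 0) (hne : d (q + 1) ≠ 0)
    (θ : ℕ → ℝ)
    (hmatch : ∀ k ≤ q,
      iteratedDeriv k (fun τ : ℝ => θ0 - σL / αL * (Real.rpow (τ / τL) (-αL) - 1)) τL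
        = iteratedDeriv k (fun τ : ℝ => ∑ m ∈ Finset.range (M + 1), θ m * I m τ) τL) :
    (iteratedDeriv (q + 1)
        (fun τ : ℝ => θ0 - σL / αL * (Real.rpow (τ / τL) (-αL) - 1)) τL
      = ∑ m ∈ Finset.range (M + 1), θ m * d m)
    ↔ θ (q + 1)
        = (1 / d (q + 1)) *
            (-(σL / (αL * τL ^ (q + 1))) * (∏ j ∈ Finset.range (q + 1), (-αL - (j : ℝ)))
              - ∑ m ∈ Finset.Icc 1 q, θ m * d m) := by
  obtain ⟨hτ0, hτ1⟩ := hτ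
  have hA : Real.rpow τL (-αL) ≠ 0 := (Real.rpow_pos_of_pos hτ0 _).ne'
  set k : ℝ := σL / (αL * Real.rpow τL (-αL)) with hk
  set C : ℝ := θ0 + σL / αL with hC
  -- the GPD piece agrees with C - k * τ^(-αL) near τL
  have hEq : (fun τ : ℝ => θ0 - σL / αL * (Real.rpow (τ / τL) (-αL) - 1))
      =ᶠ[nhds τL] fun τ => C - k * τ ^ (-αL) := by
    filter_upwards [Ioi_mem_nhds hτ0] with y hy
    have hy0 : (0:ℝ) < y := hy
    simp only [← Real.rpow_eq_pow]
    rw [show Real.rpow (y / τL) (-αL) = Real.rpow y (-αL) / Real.rpow τL (-αL) from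
      Real.div_rpow hy0.le hτ0.le (-αL)]
    rw [hk, hC]
    field_simp
    ring
  have hval : iteratedDeriv (q + 1)
      (fun τ : ℝ => θ0 - σL / αL * (Real.rpow (τ / τL) (-αL) - 1)) τL
      = -(σL / (αL * τL ^ (q + 1))) * (∏ j ∈ Finset.range (q + 1), (-αL - (j : ℝ))) := by
    rw [hEq.iteratedDeriv_eq (q + 1),
      rpow_iterated_aux C k (-αL) (q + 1) (Nat.le_add_left 1 q) τL hτ0]
    have h1 : τL ^ (-αL - (((q + 1) : ℕ) : ℝ))
        = τL ^ (-αL) * ((τL ^ (q + 1) : ℝ))⁻¹ := by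
      rw [sub_eq_add_neg, Real.rpow_add hτ0]
      congr 1
      rw [← Real.rpow_natCast τL (q + 1), ← Real.rpow_neg hτ0.le]
    rw [h1, hk]
    have hp : (τL : ℝ) ^ (q + 1) ≠ 0 := pow_ne_zero _ hτ0.ne'
    field_simp
    rw [Real.rpow_eq_pow]
    ring
  have hsum : ∑ m ∈ Finset.range (M + 1), θ m * d m
      = (∑ m ∈ Finset.Icc 1 q, θ m * d m) + θ (q + 1) * d (q + 1) := by
    have hsub : Finset.range (q + 2) ⊆ Finset.range (M + 1) := by
      intro x hx; simp only [Finset.mem_range] at hx ⊢; omega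
    rw [← Finset.sum_subset hsub (by
      intro m hm hnm
      simp only [Finset.mem_range] at hm hnm
      rw [hvan m (by omega), mul_zero])]
    rw [Finset.sum_range_succ, Finset.sum_range_succ']
    have : ∑ m ∈ Finset.Icc 1 q, θ m * d m = ∑ i ∈ Finset.range q, θ (i + 1) * d (i + 1) := by
      rw [show Finset.Icc 1 q = Finset.Ico 1 (q + 1) by rfl, Finset.sum_Ico_eq_sum_range]
      simp [add_comm]
    rw [this, hd0, mul_zero, add_zero]
  rw [hval, hsum]
  set P := -(σL / (αL * τL ^ (q + 1))) * (∏ j ∈ Finset.range (q + 1), (-αL - (j : ℝ)))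
  set S := ∑ m ∈ Finset.Icc 1 q, θ m * d m
  constructor
  · intro h
    field_simp
    linarith [h]
  · intro h
    rw [h]
    field_simp
    ring
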